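/- One-state inequality: let U ∈ 𝒢 have pressure p > 0, let i ∈ {1,2,3}, and let v*, B* ∈ ℝ³. Then for every real α with |α| > α̂_i(U, v_i*) := max{|v_i|, |v_i*|} + 𝓢_i, one has ( U + F_i(U)/α )·n* + |B*|²/2 + (1/α)·( v_i*·|B*|²/2 − B_i·(v*·B*) ) > 0. -/

import Mathlib

open scoped BigOperators

noncomputable section

/-- Euclidean dot product on ℝ³. -/
def dot3 (a b : Fin 3 → ℝ) : ℝ := ∑ j, a j * b j

/-- Squared Euclidean norm on ℝ³. -/
def normSq3 (a : Fin 3 → ℝ) : ℝ := ∑ j, (a j) ^ 2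

/-- Momentum components of a state `U = (ρ, m, B, E) ∈ ℝ⁸`. -/
def mC (U : Fin 8 → ℝ) : Fin 3 → ℝ := ![U 1, U 2, U 3]

/-- Magnetic-field components of a state. -/
def BC (U : Fin 8 → ℝ) : Fin 3 → ℝ := ![U 4, U 5, U 6]

/-- Velocity components `v = m / ρ`. -/
def velC (U : Fin 8 → ℝ) : Fin 3 → ℝ := fun j => mC U j / U 0

/-- Internal energy `𝓔(U) = E − (|m|²/ρ + |B|²)/2`. -/
def intE (U : Fin 8 → ℝ) : ℝ := U 7 - (normSq3 (mC U) / U 0 + normSq3 (BC U)) / 2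

/-- The admissible set `𝒢`. -/
def admisSet : Set (Fin 8 → ℝ) := {U | 0 < U 0 ∧ 0 < intE U}

/-- The vector `n* = (|v*|²/2, −v*, −B*, 1) ∈ ℝ⁸`. -/
def nstar (vs Bs : Fin 3 → ℝ) : Fin 8 → ℝ :=
  ![normSq3 vs / 2, -vs 0, -vs 1, -vs 2, -Bs 0, -Bs 1, -Bs 2, 1]

/-- Euclidean dot product on ℝ⁸. -/
def dot8 (U V : Fin 8 → ℝ) : ℝ := ∑ k, U k * V k

/-- Flux `F_i(U)` of a state `U` with assigned pressure `p`, in direction `i`. -/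
def flux (p : ℝ) (i : Fin 3) (U : Fin 8 → ℝ) : Fin 8 → ℝ :=
  let ρ := U 0
  let v := velC U
  let B := BC U
  let ptot := p + normSq3 B / 2
  ![ρ * v i,
    ρ * v i * v 0 - B i * B 0 + (if i = 0 then ptot else 0),
    ρ * v i * v 1 - B i * B 1 + (if i = 1 then ptot else 0),
    ρ * v i * v 2 - B i * B 2 + (if i = 2 then ptot else 0),
    v i * B 0 - B i * v 0,
    v i * B 1 - B i * v 1,
    v i * B 2 - B i * v 2,
    v i * (U 7 + ptot) - B i * dot3 v B]

/-- The fast-speed-type quantity built from a sound-speed-like value `cs`: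
`(1/√2)·√( cs² + |B|²/ρ + √((cs² + |B|²/ρ)² − 4cs²B_i²/ρ) )`. -/
def fastLike (cs : ℝ) (U : Fin 8 → ℝ) (i : Fin 3) : ℝ :=
  (1 / Real.sqrt 2) *
    Real.sqrt (cs ^ 2 + normSq3 (BC U) / U 0 +
      Real.sqrt ((cs ^ 2 + normSq3 (BC U) / U 0) ^ 2 - 4 * cs ^ 2 * (BC U i) ^ 2 / U 0))

/-- `𝓢_s = p/(ρ√(2e))` for a state `U` with pressure `p`. -/
def sSound (p : ℝ) (U : Fin 8 → ℝ) : ℝ :=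
  p / (U 0 * Real.sqrt (2 * (intE U / U 0)))

/-- `𝓢_i` for a state `U` with pressure `p`. -/
def sFast (p : ℝ) (U : Fin 8 → ℝ) (i : Fin 3) : ℝ := fastLike (sSound p U) U i

/-- `f(U, Ũ; σ) = (|B̃ − B|/√2)·√(σ²/ρ + (1−σ)²/ρ̃)`. -/
def fCoup (U Ut : Fin 8 → ℝ) (σ : ℝ) : ℝ :=
  (Real.sqrt (normSq3 (fun j => BC Ut j - BC U j)) / Real.sqrt 2) *
    Real.sqrt (σ ^ 2 / U 0 + (1 - σ) ^ 2 / Ut 0)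

/-- `α_i(U, Ũ; σ)` for states `U, Ũ` with pressures `p, p̃`. -/
def alphaSig (i : Fin 3) (U Ut : Fin 8 → ℝ) (p pt : ℝ) (σ : ℝ) : ℝ :=
  max (max (|velC U i| + sFast p U i) (|velC Ut i| + sFast pt Ut i))
      (|σ * velC U i + (1 - σ) * velC Ut i| + max (sFast p U i) (sFast pt Ut i))
  + fCoup U Ut σ

/-- `α_i(U, Ũ) = inf_{σ ∈ ℝ} α_i(U, Ũ; σ)`. -/
def alphaInf (i : Fin 3) (U Ut : Fin 8 → ℝ) (p pt : ℝ) : ℝ :=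
  ⨅ σ : ℝ, alphaSig i U Ut p pt σ

/-- Ideal-EOS pressure `p = (γ−1)ρe = (γ−1)𝓔(U)`. -/
def idealP (γ : ℝ) (U : Fin 8 → ℝ) : ℝ := (γ - 1) * intE U

/-- Ideal-EOS sound speed `𝓒_s = √(γp/ρ)`. -/
def cSound (γ : ℝ) (U : Fin 8 → ℝ) : ℝ := Real.sqrt (γ * idealP γ U / U 0)

/-- Ideal-EOS fast speed `𝓒_i`. -/
def cFast (γ : ℝ) (U : Fin 8 → ℝ) (i : Fin 3) : ℝ := fastLike (cSound γ U) U i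

/-- Ideal-EOS spectral radius `𝓡_i(U) = |v_i| + 𝓒_i`. -/
def specR (γ : ℝ) (i : Fin 3) (U : Fin 8 → ℝ) : ℝ := |velC U i| + cFast γ U i

/-- Pressure of a state under a general EOS function `P(ρ, e)`. -/
def presOf (P : ℝ → ℝ → ℝ) (U : Fin 8 → ℝ) : ℝ := P (U 0) (intE U / U 0)

/-- Lax–Friedrichs numerical flux with viscosity `α`, under EOS function `P`. -/
def lfFlux (P : ℝ → ℝ → ℝ) (α : ℝ) (i : Fin 3) (Um Up : Fin 8 → ℝ) : Fin 8 → ℝ :=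
  (1 / 2 : ℝ) • (flux (presOf P Um) i Um + flux (presOf P Up) i Up - α • (Up - Um))

/-- Lax–Friedrichs numerical flux with viscosity `α`, ideal EOS of index `γ`. -/
def lfFluxIdeal (γ : ℝ) (α : ℝ) (i : Fin 3) (Um Up : Fin 8 → ℝ) : Fin 8 → ℝ :=
  (1 / 2 : ℝ) • (flux (idealP γ Um) i Um + flux (idealP γ Up) i Up - α • (Up - Um))


set_option maxHeartbeats 1000000

private lemma vec8_at0 (a b c d e f g h : ℝ) : ![a,b,c,d,e,f,g,h] (0:Fin 8) = a := rfl
private lemma vec8_at1 (a b c d e f g h : ℝ) : ![a,b,c,d,e,f,g,h] (1:Fin 8) = b := rfl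
private lemma vec8_at2 (a b c d e f g h : ℝ) : ![a,b,c,d,e,f,g,h] (2:Fin 8) = c := rfl
private lemma vec8_at3 (a b c d e f g h : ℝ) : ![a,b,c,d,e,f,g,h] (3:Fin 8) = d := rfl
private lemma vec8_at4 (a b c d e f g h : ℝ) : ![a,b,c,d,e,f,g,h] (4:Fin 8) = e := rfl
private lemma vec8_at5 (a b c d e f g h : ℝ) : ![a,b,c,d,e,f,g,h] (5:Fin 8) = f := rfl
private lemma vec8_at6 (a b c d e f g h : ℝ) : ![a,b,c,d,e,f,g,h] (6:Fin 8) = g := rfl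
private lemma vec8_at7 (a b c d e f g h : ℝ) : ![a,b,c,d,e,f,g,h] (7:Fin 8) = h := rfl
private lemma fin3_mk0 (h : (0:ℕ) < 3) : (⟨0, h⟩ : Fin 3) = 0 := rfl
private lemma fin3_mk1 (h : (1:ℕ) < 3) : (⟨1, h⟩ : Fin 3) = 1 := rfl
private lemma fin3_mk2 (h : (2:ℕ) < 3) : (⟨2, h⟩ : Fin 3) = 2 := rfl

private lemma vec3_at0 (a b c : ℝ) : ![a,b,c] (0:Fin 3) = a := rfl
private lemma vec3_at1 (a b c : ℝ) : ![a,b,c] (1:Fin 3) = b := rfl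
private lemma vec3_at2 (a b c : ℝ) : ![a,b,c] (2:Fin 3) = c := rfl


private lemma abs_le_of_sq_le'' (A B : ℝ) (hB : 0 ≤ B) (h : A^2 ≤ B^2) : |A| ≤ B := by
  rw [← Real.sqrt_sq_eq_abs]
  calc Real.sqrt (A^2) ≤ Real.sqrt (B^2) := Real.sqrt_le_sqrt h
    _ = B := Real.sqrt_sq hB

private lemma fast_props' (q r c s : ℝ) (hc0 : 0 ≤ c) (hr : 0 ≤ r) (hrq : r ≤ q)
    (hs : s = (1/Real.sqrt 2) * Real.sqrt (c + q + Real.sqrt ((c + q)^2 - 4*c*r))) :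
    0 ≤ s ∧ c ≤ s^2 ∧ q ≤ s^2 ∧ s^4 - (c + q)*s^2 + c*r = 0 := by
  have hcqr : 0 ≤ c*(q - r) := mul_nonneg hc0 (by linarith)
  have hdisc0 : 0 ≤ (c+q)^2 - 4*c*r := by nlinarith [sq_nonneg (c - q)]
  have hA0 : 0 ≤ Real.sqrt ((c+q)^2 - 4*c*r) := Real.sqrt_nonneg _
  have hA2 : (Real.sqrt ((c+q)^2 - 4*c*r))^2 = (c+q)^2 - 4*c*r := Real.sq_sqrt hdisc0
  have habs : |c - q| ≤ Real.sqrt ((c+q)^2 - 4*c*r) := by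
    apply abs_le_of_sq_le'' _ _ hA0
    rw [hA2]; nlinarith
  have h1 : c - q ≤ Real.sqrt ((c+q)^2 - 4*c*r) := le_trans (le_abs_self _) habs
  have h2 : q - c ≤ Real.sqrt ((c+q)^2 - 4*c*r) := by
    rw [abs_sub_comm] at habs
    exact le_trans (le_abs_self _) habs
  have hX0 : 0 ≤ c + q + Real.sqrt ((c+q)^2 - 4*c*r) := by linarith
  have hs2 : s^2 = (c + q + Real.sqrt ((c+q)^2 - 4*c*r))/2 := by
    rw [hs, mul_pow, div_pow, one_pow, Real.sq_sqrt (by norm_num : (0:ℝ) ≤ 2),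
      Real.sq_sqrt hX0]
    ring
  have hs0 : 0 ≤ s := by rw [hs]; positivity
  refine ⟨hs0, by linarith, by linarith, ?_⟩
  linear_combination (s^2 + (c + q + Real.sqrt ((c+q)^2 - 4*c*r))/2 - (c+q))*hs2 + (1/4)*hA2


private lemma abs_le_of_sq_le' (A B : ℝ) (hB : 0 ≤ B) (h : A^2 ≤ B^2) : |A| ≤ B := by
  rw [← Real.sqrt_sq_eq_abs]
  calc Real.sqrt (A^2) ≤ Real.sqrt (B^2) := Real.sqrt_le_sqrt h
    _ = B := Real.sqrt_sq hB

private lemma core_ineq' (c ρ En p a b s x y z : ℝ) (hρ : 0 < ρ) (hEn : 0 < En) (hp : 0 < p)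
    (hs : 0 ≤ s)
    (hc : 2 * ρ * En * c = p^2) (hq : c ≤ s^2) (hab : a^2 + b^2 ≤ ρ * s^2)
    (hid : ρ * s^4 - (ρ*c + a^2 + b^2) * s^2 + c * a^2 = 0) :
    p*x + b*z*x + a*y*z ≤ s * (En + ρ*x^2/2 + ρ*y^2/2 + z^2/2) := by
  have h2e : 0 < 2 * ρ * En := by positivity
  have hc0 : 0 < c := by
    by_contra h
    push_neg at h
    nlinarith [mul_nonpos_of_nonneg_of_nonpos h2e.le h, pow_pos hp 2]
  have hs0 : 0 < s := by nlinarith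
  have habz : (0:ℝ) ≤ ρ*s^2 - a^2 := by nlinarith
  rcases eq_or_lt_of_le hq with hqe | hql
  · have hb2 : b^2 * s^2 = 0 := by linear_combination -hid - (ρ*s^2 - a^2)*hqe
    have hb0 : b = 0 := by
      have h2 : b^2 = 0 := by
        rcases mul_eq_zero.1 hb2 with h | h
        · exact h
        · nlinarith
      exact pow_eq_zero_iff (n := 2) (by norm_num) |>.1 h2
    subst hb0
    have key : 2*ρ*c*s * (s * (En + ρ*x^2/2 + ρ*y^2/2 + z^2/2) - (p*x + 0*z*x + a*y*z))
        = (s*p - ρ*c*x)^2 + c*(ρ*s*y - a*z)^2 + c*(ρ*s^2 - a^2)*z^2 := by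
      linear_combination s^2*hc - ρ^2*c*x^2*hqe
    have hN : 0 ≤ (s*p - ρ*c*x)^2 + c*(ρ*s*y - a*z)^2 + c*(ρ*s^2 - a^2)*z^2 := by
      have h1 := mul_nonneg (mul_nonneg hc0.le habz) (sq_nonneg z)
      have h2 := mul_nonneg hc0.le (sq_nonneg (ρ*s*y - a*z))
      nlinarith [sq_nonneg (s*p - ρ*c*x)]
    rw [← key] at hN
    have hA : 0 < 2*ρ*c*s := by positivity
    have := (mul_nonneg_iff_of_pos_left hA).1 hN
    linarith
  · have hq0 : 0 < s^2 - c := by linarith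
    have key : (2*ρ*c*(s^2-c)*s) * (s * (En + ρ*x^2/2 + ρ*y^2/2 + z^2/2) - (p*x + b*z*x + a*y*z))
        = (s^2-c)*(s*p - ρ*c*x)^2 + c*(ρ*(s^2-c)*x - b*s*z)^2 + c*(s^2-c)*(ρ*s*y - a*z)^2
          + c*z^2*(ρ*s^4 - (ρ*c + a^2 + b^2)*s^2 + c*a^2) := by
      linear_combination (s^2*(s^2-c))*hc
    rw [hid, mul_zero, add_zero] at key
    have hN : 0 ≤ (s^2-c)*(s*p - ρ*c*x)^2 + c*(ρ*(s^2-c)*x - b*s*z)^2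
        + c*(s^2-c)*(ρ*s*y - a*z)^2 := by
      have h1 := mul_nonneg hq0.le (sq_nonneg (s*p - ρ*c*x))
      have h2 := mul_nonneg hc0.le (sq_nonneg (ρ*(s^2-c)*x - b*s*z))
      have h3 := mul_nonneg (mul_nonneg hc0.le hq0.le) (sq_nonneg (ρ*s*y - a*z))
      linarith
    rw [← key] at hN
    have hA : 0 < 2*ρ*c*(s^2-c)*s := by positivity
    have := (mul_nonneg_iff_of_pos_left hA).1 hN
    linarith

private lemma aux_pos (ρ En p v1 w1 d1 d2 d3 g1 g2 g3 B1 B2 B3 θ s c : ℝ)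
    (hρ : 0 < ρ) (hp : 0 < p) (hEn : 0 < En)
    (hc : 2 * ρ * En * c = p^2)
    (hs0 : 0 ≤ s) (hsc : c ≤ s^2) (hsb : B1^2 + B2^2 + B3^2 ≤ ρ * s^2)
    (hsid : ρ*s^4 - (ρ*c + (B1^2 + B2^2 + B3^2))*s^2 + c*B1^2 = 0)
    (hθ : |θ| * (max |v1| |w1| + s) < 1) :
    0 < En*(1+θ*v1)
      + (ρ/2)*(d1^2+d2^2+d3^2)*(1+θ*v1)
      + (1/2)*(g1^2+g2^2+g3^2)*(1+θ*w1)
      + θ*( p*d1 + d1*(B1*g1+B2*g2+B3*g3) - B1*(d1*g1+d2*g2+d3*g3) ) := by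
  have ha2 : |B1|^2 = B1^2 := sq_abs B1
  have hb2 : (Real.sqrt (B2^2+B3^2))^2 = B2^2 + B3^2 := Real.sq_sqrt (by positivity)
  have hX2 : |d1|^2 = d1^2 := sq_abs d1
  have hy2 : (Real.sqrt (d2^2+d3^2))^2 = d2^2 + d3^2 := Real.sq_sqrt (by positivity)
  have hz2 : (Real.sqrt (g2^2+g3^2))^2 = g2^2 + g3^2 := Real.sq_sqrt (by positivity)
  have ha0 : (0:ℝ) ≤ |B1| := abs_nonneg _
  have hb0 : (0:ℝ) ≤ Real.sqrt (B2^2+B3^2) := Real.sqrt_nonneg _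
  have hX0 : (0:ℝ) ≤ |d1| := abs_nonneg _
  have hy0 : (0:ℝ) ≤ Real.sqrt (d2^2+d3^2) := Real.sqrt_nonneg _
  have hz0 : (0:ℝ) ≤ Real.sqrt (g2^2+g3^2) := Real.sqrt_nonneg _
  -- core inequality
  have hcore : p* |d1| + Real.sqrt (B2^2+B3^2)*Real.sqrt (g2^2+g3^2)* |d1|
        + |B1| *Real.sqrt (d2^2+d3^2)*Real.sqrt (g2^2+g3^2)
      ≤ s * (En + ρ* |d1|^2/2 + ρ*(Real.sqrt (d2^2+d3^2))^2/2 + (Real.sqrt (g2^2+g3^2))^2/2) := by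
    have hab' : |B1|^2 + (Real.sqrt (B2^2+B3^2))^2 ≤ ρ * s^2 := by rw [ha2, hb2]; linarith
    have hid' : ρ*s^4 - (ρ*c + |B1|^2 + (Real.sqrt (B2^2+B3^2))^2)*s^2 + c * |B1|^2 = 0 := by
      rw [ha2, hb2]; linarith [hsid]
    exact core_ineq' c ρ En p (|B1|) (Real.sqrt (B2^2+B3^2)) s (|d1|) (Real.sqrt (d2^2+d3^2))
      (Real.sqrt (g2^2+g3^2)) hρ hEn hp hs0 hc hsc hab' hid' 
  -- bound on the cross term
  have hCeq : p*d1 + d1*(B1*g1+B2*g2+B3*g3) - B1*(d1*g1+d2*g2+d3*g3)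
      = p*d1 + (g2*(B2*d1-B1*d2) + g3*(B3*d1-B1*d3)) := by ring
  have step2 : Real.sqrt ((B2*d1-B1*d2)^2 + (B3*d1-B1*d3)^2)
      ≤ Real.sqrt (B2^2+B3^2)* |d1| + |B1| *Real.sqrt (d2^2+d3^2) := by
    have hQ : |B2*d2 + B3*d3| ≤ Real.sqrt (B2^2+B3^2)*Real.sqrt (d2^2+d3^2) := by
      apply abs_le_of_sq_le' _ _ (by positivity)
      have h := sq_nonneg (B2*d3 - B3*d2)
      rw [mul_pow, hb2, hy2]
      nlinarith
    have h1 : |B1*d1| = |B1| * |d1| := abs_mul _ _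
    have h3 : -(B1*d1*(B2*d2+B3*d3)) ≤ (|B1| * |d1|)*(Real.sqrt (B2^2+B3^2)*Real.sqrt (d2^2+d3^2)) := by
      calc -(B1*d1*(B2*d2+B3*d3)) ≤ |B1*d1*(B2*d2+B3*d3)| := neg_le_abs _
        _ = |B1*d1| * |B2*d2+B3*d3| := abs_mul _ _
        _ ≤ (|B1| * |d1|) * (Real.sqrt (B2^2+B3^2)*Real.sqrt (d2^2+d3^2)) := by
            rw [h1]
            exact mul_le_mul_of_nonneg_left hQ (by positivity)
    have hsq : (B2*d1-B1*d2)^2 + (B3*d1-B1*d3)^2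
        ≤ (Real.sqrt (B2^2+B3^2) * |d1| + |B1| * Real.sqrt (d2^2+d3^2))^2 := by
      nlinarith [h3, hb2, hX2, ha2, hy2]
    calc Real.sqrt ((B2*d1-B1*d2)^2 + (B3*d1-B1*d3)^2)
        ≤ Real.sqrt ((Real.sqrt (B2^2+B3^2) * |d1| + |B1| * Real.sqrt (d2^2+d3^2))^2) :=
          Real.sqrt_le_sqrt hsq
      _ = Real.sqrt (B2^2+B3^2) * |d1| + |B1| * Real.sqrt (d2^2+d3^2) :=
          Real.sqrt_sq (by positivity)
  have step1 : |g2*(B2*d1-B1*d2) + g3*(B3*d1-B1*d3)|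
      ≤ Real.sqrt (g2^2+g3^2) * Real.sqrt ((B2*d1-B1*d2)^2 + (B3*d1-B1*d3)^2) := by
    apply abs_le_of_sq_le' _ _ (by positivity)
    rw [mul_pow, hz2, Real.sq_sqrt (by positivity)]
    nlinarith [sq_nonneg (g2*(B3*d1-B1*d3) - g3*(B2*d1-B1*d2))]
  have hCbound : |p*d1 + d1*(B1*g1+B2*g2+B3*g3) - B1*(d1*g1+d2*g2+d3*g3)|
      ≤ p* |d1| + Real.sqrt (B2^2+B3^2)*Real.sqrt (g2^2+g3^2)* |d1|
        + |B1| *Real.sqrt (d2^2+d3^2)*Real.sqrt (g2^2+g3^2) := by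
    rw [hCeq]
    calc |p*d1 + (g2*(B2*d1-B1*d2) + g3*(B3*d1-B1*d3))|
        ≤ |p*d1| + |g2*(B2*d1-B1*d2) + g3*(B3*d1-B1*d3)| := abs_add_le _ _
      _ ≤ p* |d1| + Real.sqrt (g2^2+g3^2) * Real.sqrt ((B2*d1-B1*d2)^2 + (B3*d1-B1*d3)^2) := by
          rw [abs_mul, abs_of_pos hp]
          exact add_le_add le_rfl step1
      _ ≤ p* |d1| + Real.sqrt (g2^2+g3^2) * (Real.sqrt (B2^2+B3^2)* |d1| + |B1| *Real.sqrt (d2^2+d3^2)) := by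
          exact add_le_add le_rfl (mul_le_mul_of_nonneg_left step2 hz0)
      _ = p* |d1| + Real.sqrt (B2^2+B3^2)*Real.sqrt (g2^2+g3^2)* |d1|
          + |B1| *Real.sqrt (d2^2+d3^2)*Real.sqrt (g2^2+g3^2) := by ring
  -- bound θ*C from below
  have hW : s * (En + ρ* |d1|^2/2 + ρ*(Real.sqrt (d2^2+d3^2))^2/2 + (Real.sqrt (g2^2+g3^2))^2/2)
      ≤ s * (En + ρ*(d1^2+d2^2+d3^2)/2 + (g1^2+g2^2+g3^2)/2) := by
    apply mul_le_mul_of_nonneg_left _ hs0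
    rw [hX2, hy2, hz2]
    linarith [sq_nonneg g1]
  have hθC : -( |θ| * (s * (En + ρ*(d1^2+d2^2+d3^2)/2 + (g1^2+g2^2+g3^2)/2)))
      ≤ θ*(p*d1 + d1*(B1*g1+B2*g2+B3*g3) - B1*(d1*g1+d2*g2+d3*g3)) := by
    have h1 : |θ*(p*d1 + d1*(B1*g1+B2*g2+B3*g3) - B1*(d1*g1+d2*g2+d3*g3))|
        ≤ |θ| * (s * (En + ρ*(d1^2+d2^2+d3^2)/2 + (g1^2+g2^2+g3^2)/2)) := by
      rw [abs_mul]
      apply mul_le_mul_of_nonneg_left _ (abs_nonneg θ)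
      exact le_trans hCbound (le_trans hcore hW)
    linarith only [h1, neg_abs_le (θ*(p*d1 + d1*(B1*g1+B2*g2+B3*g3) - B1*(d1*g1+d2*g2+d3*g3)))]
  -- bounds on 1 + θv1 and 1 + θw1
  have hM1 : |θ| * |v1| + |θ| * s < 1 := by
    have h := mul_le_mul_of_nonneg_left (le_max_left |v1| |w1|) (abs_nonneg θ)
    have hexp0 : |θ| * (max |v1| |w1| + s) = |θ| * max |v1| |w1| + |θ| * s := by ring
    linarith only [h, hθ, hexp0]
  have hM2 : |θ| * |w1| + |θ| * s < 1 := by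
    have h := mul_le_mul_of_nonneg_left (le_max_right |v1| |w1|) (abs_nonneg θ)
    have hexp0 : |θ| * (max |v1| |w1| + s) = |θ| * max |v1| |w1| + |θ| * s := by ring
    linarith only [h, hθ, hexp0]
  have hv1 : |θ| * s < 1 + θ*v1 := by
    have h : -(|θ| * |v1|) ≤ θ*v1 := by rw [← abs_mul]; exact neg_abs_le _
    linarith only [h, hM1]
  have hw1 : |θ| * s < 1 + θ*w1 := by
    have h : -(|θ| * |w1|) ≤ θ*w1 := by rw [← abs_mul]; exact neg_abs_le _
    linarith only [h, hM2]
  -- assemble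
  have f1 : En * (|θ| * s) < En * (1+θ*v1) := mul_lt_mul_of_pos_left hv1 hEn
  have f2 : (ρ/2)*(d1^2+d2^2+d3^2) * (|θ| * s) ≤ (ρ/2)*(d1^2+d2^2+d3^2) * (1+θ*v1) :=
    mul_le_mul_of_nonneg_left hv1.le (by positivity)
  have f3 : (1/2)*(g1^2+g2^2+g3^2) * (|θ| * s) ≤ (1/2)*(g1^2+g2^2+g3^2) * (1+θ*w1) :=
    mul_le_mul_of_nonneg_left hw1.le (by positivity)
  have hexp : |θ| * (s * (En + ρ*(d1^2+d2^2+d3^2)/2 + (g1^2+g2^2+g3^2)/2))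
      = En*(|θ| * s) + (ρ/2)*(d1^2+d2^2+d3^2)*(|θ| * s)
        + (1/2)*(g1^2+g2^2+g3^2)*(|θ| * s) := by ring
  linarith only [f1, f2, f3, hθC, hexp]

/-- one-state inequality: for `U ∈ 𝒢` with pressure `p > 0`,
`i ∈ {1,2,3}`, `v*, B* ∈ ℝ³`, and `|α| > α̂_i(U, v_i*) = max{|v_i|, |v_i*|} + 𝓢_i`,
`(U + F_i(U)/α)·n* + |B*|²/2 + (1/α)(v_i*|B*|²/2 − B_i(v*·B*)) > 0`. -/
theorem one_state_inequality (i : Fin 3) (U : Fin 8 → ℝ) (hU : U ∈ admisSet)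
    (p : ℝ) (hp : 0 < p) (vs Bs : Fin 3 → ℝ) (α : ℝ)
    (hα : max |velC U i| |vs i| + sFast p U i < |α|) :
    0 < dot8 (U + α⁻¹ • flux p i U) (nstar vs Bs) + normSq3 Bs / 2
        + α⁻¹ * (vs i * (normSq3 Bs / 2) - BC U i * dot3 vs Bs) := by
  obtain ⟨hρ, hEn⟩ := hU
  have hρ' : U 0 ≠ 0 := ne_of_gt hρ
  have h2e : (0:ℝ) < 2 * (intE U / U 0) := by positivity
  have hc : 2 * U 0 * intE U * (sSound p U)^2 = p^2 := by
    rw [sSound, div_pow, mul_pow, Real.sq_sqrt h2e.le]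
    field_simp
  have hBi2 : (BC U i)^2 ≤ normSq3 (BC U) := by
    rw [normSq3]
    exact Finset.single_le_sum (f := fun j => (BC U j)^2) (fun j _ => sq_nonneg _)
      (Finset.mem_univ i)
  have hsdef : sFast p U i = (1/Real.sqrt 2) * Real.sqrt ((sSound p U)^2
      + normSq3 (BC U)/U 0
      + Real.sqrt (((sSound p U)^2 + normSq3 (BC U)/U 0)^2
        - 4*(sSound p U)^2*((BC U i)^2/U 0))) := by
    rw [sFast, fastLike,
      show 4*(sSound p U)^2*(BC U i)^2/U 0 = 4*(sSound p U)^2*((BC U i)^2/U 0) from by ring]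
  obtain ⟨hs0, hsc, hq', hid'⟩ := fast_props' (normSq3 (BC U)/U 0) ((BC U i)^2/U 0)
    ((sSound p U)^2) (sFast p U i) (sq_nonneg _) (div_nonneg (sq_nonneg _) hρ.le)
    ((div_le_div_iff_of_pos_right hρ).2 hBi2) hsdef
  have hsb : normSq3 (BC U) ≤ U 0 * (sFast p U i)^2 := by
    have h := (div_le_iff₀ hρ).1 hq'
    linarith
  have hqdef : normSq3 (BC U) = U 0 * (normSq3 (BC U)/U 0) := by field_simp
  have hrdef : (BC U i)^2 = U 0 * ((BC U i)^2/U 0) := by field_simp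
  have hsid : U 0*(sFast p U i)^4 - (U 0*(sSound p U)^2 + normSq3 (BC U))*(sFast p U i)^2
      + (sSound p U)^2*(BC U i)^2 = 0 := by
    linear_combination U 0*hid' - (sFast p U i)^2*hqdef + (sSound p U)^2*hrdef
  have hα0 : 0 < |α| :=
    lt_of_le_of_lt (add_nonneg (le_trans (abs_nonneg _) (le_max_left _ _)) hs0) hα
  have hθ : |α⁻¹| * (max |velC U i| |vs i| + sFast p U i) < 1 := by
    rw [abs_inv, ← div_eq_inv_mul]
    exact (div_lt_one hα0).2 hα
  obtain ⟨v1, hv1⟩ : ∃ w, U 1 = U 0 * w := ⟨U 1 / U 0, by field_simp⟩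
  obtain ⟨v2, hv2⟩ : ∃ w, U 2 = U 0 * w := ⟨U 2 / U 0, by field_simp⟩
  obtain ⟨v3, hv3⟩ : ∃ w, U 3 = U 0 * w := ⟨U 3 / U 0, by field_simp⟩
  have hIE : intE U = U 7 - (U 0*(v1^2+v2^2+v3^2) + (U 4^2+U 5^2+U 6^2))/2 := by
    simp only [intE, normSq3, mC, BC, Fin.sum_univ_three, vec3_at0, vec3_at1, vec3_at2]
    rw [hv1, hv2, hv3]
    field_simp
  rw [hIE] at hEn hc
  clear hα hBi2 hq' hid' hqdef hrdef hsdef h2e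
  fin_cases i
  · simp only [fin3_mk0, fin3_mk1, fin3_mk2, velC, mC, BC, normSq3, Fin.sum_univ_three,
      vec3_at0, vec3_at1, vec3_at2] at hθ hsid hsb hs0 hsc
    rw [hv1] at hθ
    simp only [mul_div_cancel_left₀ _ hρ'] at hθ
    have H := aux_pos (U 0) (U 7 - (U 0*(v1^2+v2^2+v3^2) + (U 4^2+U 5^2+U 6^2))/2) p
      v1 (vs 0) (v1 - vs 0) (v2 - vs 1)
      (v3 - vs 2) (U 4 - Bs 0) (U 5 - Bs 1) (U 6 - Bs 2) (U 4) (U 5) (U 6) α⁻¹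
      (sFast p U 0) ((sSound p U)^2) hρ hp hEn hc hs0 hsc (by linarith)
      (by linear_combination hsid) hθ
    refine lt_of_lt_of_eq H ?_
    simp only [dot8, dot3, normSq3, nstar, flux, velC, mC, BC, Fin.sum_univ_eight,
      Fin.sum_univ_three, Pi.add_apply, Pi.smul_apply, smul_eq_mul,
      vec8_at0, vec8_at1, vec8_at2, vec8_at3, vec8_at4, vec8_at5, vec8_at6, vec8_at7,
      vec3_at0, vec3_at1, vec3_at2, fin3_mk0, fin3_mk1, fin3_mk2,
      eq_self_iff_true, if_true, eq_false (show ¬((0:Fin 3) = 1) by decide), if_false, eq_false (show ¬((0:Fin 3) = 2) by decide), if_false]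
    rw [hv1, hv2, hv3]
    simp only [mul_div_cancel_left₀ _ hρ']
    ring
  · simp only [fin3_mk0, fin3_mk1, fin3_mk2, velC, mC, BC, normSq3, Fin.sum_univ_three,
      vec3_at0, vec3_at1, vec3_at2] at hθ hsid hsb hs0 hsc
    rw [hv2] at hθ
    simp only [mul_div_cancel_left₀ _ hρ'] at hθ
    have H := aux_pos (U 0) (U 7 - (U 0*(v1^2+v2^2+v3^2) + (U 4^2+U 5^2+U 6^2))/2) p
      v2 (vs 1) (v2 - vs 1) (v1 - vs 0)
      (v3 - vs 2) (U 5 - Bs 1) (U 4 - Bs 0) (U 6 - Bs 2) (U 5) (U 4) (U 6) α⁻¹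
      (sFast p U 1) ((sSound p U)^2) hρ hp hEn (by linear_combination hc) hs0 hsc (by linarith)
      (by linear_combination hsid) hθ
    refine lt_of_lt_of_eq H ?_
    simp only [dot8, dot3, normSq3, nstar, flux, velC, mC, BC, Fin.sum_univ_eight,
      Fin.sum_univ_three, Pi.add_apply, Pi.smul_apply, smul_eq_mul,
      vec8_at0, vec8_at1, vec8_at2, vec8_at3, vec8_at4, vec8_at5, vec8_at6, vec8_at7,
      vec3_at0, vec3_at1, vec3_at2, fin3_mk0, fin3_mk1, fin3_mk2,
      eq_false (show ¬((1:Fin 3) = 0) by decide), if_false, eq_self_iff_true, if_true, eq_false (show ¬((1:Fin 3) = 2) by decide), if_false]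
    rw [hv1, hv2, hv3]
    simp only [mul_div_cancel_left₀ _ hρ']
    ring
  · simp only [fin3_mk0, fin3_mk1, fin3_mk2, velC, mC, BC, normSq3, Fin.sum_univ_three,
      vec3_at0, vec3_at1, vec3_at2] at hθ hsid hsb hs0 hsc
    rw [hv3] at hθ
    simp only [mul_div_cancel_left₀ _ hρ'] at hθ
    have H := aux_pos (U 0) (U 7 - (U 0*(v1^2+v2^2+v3^2) + (U 4^2+U 5^2+U 6^2))/2) p
      v3 (vs 2) (v3 - vs 2) (v1 - vs 0)
      (v2 - vs 1) (U 6 - Bs 2) (U 4 - Bs 0) (U 5 - Bs 1) (U 6) (U 4) (U 5) α⁻¹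
      (sFast p U 2) ((sSound p U)^2) hρ hp hEn (by linear_combination hc) hs0 hsc (by linarith)
      (by linear_combination hsid) hθ
    refine lt_of_lt_of_eq H ?_
    simp only [dot8, dot3, normSq3, nstar, flux, velC, mC, BC, Fin.sum_univ_eight,
      Fin.sum_univ_three, Pi.add_apply, Pi.smul_apply, smul_eq_mul,
      vec8_at0, vec8_at1, vec8_at2, vec8_at3, vec8_at4, vec8_at5, vec8_at6, vec8_at7,
      vec3_at0, vec3_at1, vec3_at2, fin3_mk0, fin3_mk1, fin3_mk2,
      eq_false (show ¬((2:Fin 3) = 0) by decide), if_false, eq_false (show ¬((2:Fin 3) = 1) by decide), if_false, eq_self_iff_true, if_true]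
    rw [hv1, hv2, hv3]
    simp only [mul_div_cancel_left₀ _ hρ']
    ring
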